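/- For every ξ on the unit circle with ξ ≠ 1, the characteristic function of the second-order backward difference formula, δ(ξ) = 3/2 - 2ξ + ξ²/2, has strictly positive real part. -/

import Mathlib

theorem bdf2_symbol_positive_real_part (ξ : ℂ) (hξ : ‖ξ‖ = 1) (hne : ξ ≠ 1) :
    0 < (3/2 - 2*ξ + ξ^2/2).re := by
  have hsq : ξ.re ^ 2 + ξ.im ^ 2 = 1 := by
    have := Complex.sq_norm ξ
    rw [hξ] at this
    simp [Complex.normSq_apply] at this
    nlinarith [this]
  have hx : ξ.re ≠ 1 := by
    intro h
    apply hne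
    have him : ξ.im = 0 := by nlinarith
    exact Complex.ext h him
  have key : (3/2 - 2*ξ + ξ^2/2).re = (1 - ξ.re) ^ 2 := by
    simp [Complex.add_re, Complex.sub_re, Complex.mul_re, Complex.div_re, pow_two,
      Complex.normSq_apply]
    nlinarith [hsq]
  rw [key]
  have : 1 - ξ.re ≠ 0 := by intro h; apply hx; linarith
  positivity
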